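/- arXiv:2309.06499 — 2 statements merged into one kernel-verified Lean document; each statement's English description precedes it below -/
import Mathlib

section
/- Suppose h_b(b⁻) ≥ γ where γ ≥ √(2 αᵀΛα)·erf⁻¹(1-2ε) - ξ(b⁻), and h_b(b⁺) = h_b(b⁻) + αᵀθ + ξ(b⁻) with αᵀθ ~ N(0, αᵀΛα), αᵀΛα > 0, ε ∈ (0, 1/2). Then Pr[h_b(b⁺) ≥ 0] ≥ 1 - ε. -/
open MeasureTheory ProbabilityTheory Matrix

/-- The standard error function. -/
noncomputable def erf (x : ℝ) : ℝ :=
  (2 / Real.sqrt Real.pi) * ∫ t in (0:ℝ)..x, Real.exp (-t ^ 2)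

/-- The inverse error function. -/
noncomputable def erfInv : ℝ → ℝ := Function.invFun erf

section ErfLemmas

open Set Filter

lemma integrable_exp_neg_sq : Integrable (fun t : ℝ => Real.exp (-t ^ 2)) := by
  simpa using integrable_exp_neg_mul_sq (one_pos)

lemma erf_zero : erf 0 = 0 := by simp [erf]

lemma erf_mono : Monotone erf := by
  intro x y hxy
  have h1 : (∫ t in (0:ℝ)..x, Real.exp (-t ^ 2)) + ∫ t in x..y, Real.exp (-t ^ 2)
      = ∫ t in (0:ℝ)..y, Real.exp (-t ^ 2) :=
    intervalIntegral.integral_add_adjacent_intervals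
      integrable_exp_neg_sq.intervalIntegrable integrable_exp_neg_sq.intervalIntegrable
  have h2 : 0 ≤ ∫ t in x..y, Real.exp (-t ^ 2) :=
    intervalIntegral.integral_nonneg hxy (fun u _ => (Real.exp_pos _).le)
  have h3 : 0 ≤ 2 / Real.sqrt Real.pi := by positivity
  unfold erf
  nlinarith [h1, h2, h3]

lemma erf_tendsto_one : Tendsto erf atTop (nhds 1) := by
  have hint : ∫ t in Ioi (0:ℝ), Real.exp (-t ^ 2) = Real.sqrt Real.pi / 2 := by
    simpa using integral_gaussian_Ioi 1
  have h := intervalIntegral_tendsto_integral_Ioi (0:ℝ)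
    (integrable_exp_neg_sq.integrableOn) (tendsto_id (α := ℝ))
  rw [hint] at h
  have := h.const_mul (2 / Real.sqrt Real.pi)
  have hπ : Real.sqrt Real.pi ≠ 0 := by positivity
  have heq : 2 / Real.sqrt Real.pi * (Real.sqrt Real.pi / 2) = 1 := by
    field_simp
  simp only [heq] at this
  exact this

lemma erf_continuous : Continuous erf :=
  continuous_const.mul (intervalIntegral.continuous_primitive
    (fun _ _ => integrable_exp_neg_sq.intervalIntegrable) 0)

lemma exists_erf_eq {y : ℝ} (h0 : 0 ≤ y) (h1 : y < 1) : ∃ x, erf x = y := by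
  obtain ⟨M, hM⟩ : ∃ M : ℝ, 0 ≤ M ∧ y ≤ erf M := by
    have := (erf_tendsto_one.eventually (eventually_ge_nhds h1)).and
      (eventually_ge_atTop (0:ℝ))
    obtain ⟨M, hM1, hM2⟩ := this.exists
    exact ⟨M, hM2, hM1⟩
  have := intermediate_value_Icc hM.1 erf_continuous.continuousOn
  have hy : y ∈ Icc (erf 0) (erf M) := ⟨by rwa [erf_zero], hM.2⟩
  obtain ⟨x, _, hx⟩ := this hy
  exact ⟨x, hx⟩

lemma gauss_Iic {v : ℝ} (hv : 0 < v) {a : ℝ} (_ha : 0 ≤ a) :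
    ∫ x in Iic (-a), gaussianPDFReal 0 v.toNNReal x
      = (1 - erf (a / Real.sqrt (2 * v))) / 2 := by
  set g := gaussianPDFReal 0 v.toNNReal with hg
  have hVc : (v.toNNReal : ℝ) = v := Real.coe_toNNReal v hv.le
  have hV : v.toNNReal ≠ 0 := by
    simp only [ne_eq, Real.toNNReal_eq_zero, not_le]; exact hv
  have hint : Integrable g := integrable_gaussianPDFReal 0 v.toNNReal
  have heven : ∀ x, g (-x) = g x := by
    intro x; simp [hg, gaussianPDFReal, neg_sq]
  have total : ∫ x, g x = 1 := integral_gaussianPDFReal_eq_one 0 hV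
  have hsym : ∫ x in Iic 0, g x = ∫ x in Ioi 0, g x := by
    have h1 : ∫ x in Iic (0:ℝ), g (-x) = ∫ x in Ioi (-(0:ℝ)), g x :=
      integral_comp_neg_Iic 0 g
    simp_rw [heven, neg_zero] at h1
    exact h1
  have hsum : (∫ x in Iic (0:ℝ), g x) + ∫ x in Ioi (0:ℝ), g x = 1 := by
    rw [intervalIntegral.integral_Iic_add_Ioi hint.integrableOn hint.integrableOn, total]
  have half : ∫ x in Iic (0:ℝ), g x = 1 / 2 := by linarith
  have hsplit : (∫ x in Iic (0:ℝ), g x) - ∫ x in Iic (-a), g x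
      = ∫ x in (-a)..(0:ℝ), g x :=
    intervalIntegral.integral_Iic_sub_Iic hint.integrableOn hint.integrableOn
  have hflip : ∫ x in (-a)..(0:ℝ), g x = ∫ x in (0:ℝ)..a, g x := by
    have h2 := intervalIntegral.integral_comp_neg (a := -a) (b := (0:ℝ)) (f := g)
    simp_rw [heven] at h2
    simpa using h2
  set s := Real.sqrt (2 * v) with hsdef
  have hs : 0 < s := Real.sqrt_pos.mpr (by linarith)
  have hs2 : s ^ 2 = 2 * v := Real.sq_sqrt (by linarith)
  have hig : ∀ x : ℝ, Real.exp (-(s * x) ^ 2 / (2 * v)) = Real.exp (-x ^ 2) := by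
    intro x
    congr 1
    rw [mul_pow, hs2]
    field_simp
  have hsub : ∫ x in (0:ℝ)..a, Real.exp (-x ^ 2 / (2 * v))
      = s * ∫ u in (0:ℝ)..(a / s), Real.exp (-u ^ 2) := by
    have h3 := intervalIntegral.integral_comp_mul_left
      (f := fun x => Real.exp (-x ^ 2 / (2 * v))) (a := 0) (b := a / s) hs.ne'
    simp only [mul_zero, mul_div_cancel₀ _ hs.ne'] at h3
    simp_rw [hig] at h3
    rw [h3, smul_eq_mul, ← mul_assoc, mul_inv_cancel₀ hs.ne', one_mul]
  have hgdef : ∀ x : ℝ, g x = (Real.sqrt (2 * Real.pi * v))⁻¹ * Real.exp (-x ^ 2 / (2 * v)) := by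
    intro x; simp only [hg, gaussianPDFReal, hVc, sub_zero]
  have hconst : Real.sqrt (2 * Real.pi * v) = Real.sqrt Real.pi * s := by
    rw [hsdef, ← Real.sqrt_mul Real.pi_pos.le, show Real.pi * (2 * v) = 2 * Real.pi * v by ring]
  have hπ : 0 < Real.sqrt Real.pi := Real.sqrt_pos.mpr Real.pi_pos
  have hia : ∫ x in (0:ℝ)..a, g x = erf (a / s) / 2 := by
    simp_rw [hgdef]
    rw [intervalIntegral.integral_const_mul, hsub, erf, hconst]
    field_simp
  have hfin : ∫ x in Iic (-a), g x = 1 / 2 - erf (a / s) / 2 := by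
    linarith [hsplit, hflip, hia, half]
  rw [hfin]; ring

end ErfLemmas

/-- Theorem 3 of the paper (shrunk safe set guarantee): if `h_b(b⁻) ≥ γ` with
`γ ≥ √(2 αᵀΛα)·erf⁻¹(1-2ε) - ξ(b⁻)`, the innovation satisfies
`αᵀθ ~ N(0, αᵀΛα)` with `αᵀΛα > 0`, `ε ∈ (0, 1/2)`, and
`h_b(b⁺) = h_b(b⁻) + αᵀθ + ξ(b⁻)`, then `Pr[h_b(b⁺) ≥ 0] ≥ 1 - ε`. -/
theorem shrunk_safe_set_guarantee
    {Ω : Type*} [MeasurableSpace Ω] (P : Measure Ω) [IsProbabilityMeasure P]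
    {n : ℕ} (θ : Ω → Fin n → ℝ) (Λ : Matrix (Fin n) (Fin n) ℝ) (α : Fin n → ℝ)
    (hminus ξ γ ε : ℝ) (hplus : Ω → ℝ)
    (hpos : 0 < α ⬝ᵥ Λ.mulVec α)
    (hε : ε ∈ Set.Ioo (0:ℝ) (1/2))
    (hlaw : Measure.map (fun ω => α ⬝ᵥ θ ω) P =
      gaussianReal 0 (α ⬝ᵥ Λ.mulVec α).toNNReal)
    (hγ : γ ≥ Real.sqrt (2 * (α ⬝ᵥ Λ.mulVec α)) * erfInv (1 - 2 * ε) - ξ)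
    (hhm : hminus ≥ γ)
    (hdecomp : ∀ ω, hplus ω = hminus + α ⬝ᵥ θ ω + ξ) :
    (P {ω | hplus ω ≥ 0}).toReal ≥ 1 - ε := by
  obtain ⟨hε0, hε2⟩ := hε
  set v := α ⬝ᵥ Λ.mulVec α with hvdef
  have hV : v.toNNReal ≠ 0 := by
    simp only [ne_eq, Real.toNNReal_eq_zero, not_le]; exact hpos
  -- the map is a.e. measurable since its law is a (nonzero) Gaussian
  have haem : AEMeasurable (fun ω => α ⬝ᵥ θ ω) P := by
    by_contra h
    rw [Measure.map_of_not_aemeasurable h] at hlaw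
    have h1 := congrArg (fun μ : Measure ℝ => μ Set.univ) hlaw
    simp at h1
  -- facts about erfInv
  have hy0 : (0:ℝ) ≤ 1 - 2 * ε := by linarith
  have hy1 : 1 - 2 * ε < 1 := by linarith
  have hc : erf (erfInv (1 - 2 * ε)) = 1 - 2 * ε :=
    Function.invFun_eq (exists_erf_eq hy0 hy1)
  set c := erfInv (1 - 2 * ε) with hcdef
  have hc0 : 0 ≤ c := by
    by_contra h
    have h2 : erf c ≤ erf 0 := erf_mono (le_of_lt (not_le.mp h))
    rw [erf_zero, hc] at h2
    linarith
  set s := Real.sqrt (2 * v) with hsdef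
  have hs : 0 < s := Real.sqrt_pos.mpr (by linarith)
  set a := s * c with hadef
  have ha0 : 0 ≤ a := mul_nonneg hs.le hc0
  set t := hminus + ξ with htdef
  have hta : a ≤ t := by
    have : γ ≥ s * c - ξ := hγ
    simp only [htdef, hadef]
    linarith
  have hset : {ω | hplus ω ≥ 0} = (fun ω => α ⬝ᵥ θ ω) ⁻¹' Set.Ici (-t) := by
    ext ω
    simp only [Set.mem_setOf_eq, Set.mem_preimage, Set.mem_Ici, hdecomp ω, htdef]
    constructor <;> intro h <;> linarith
  rw [hset, ← Measure.map_apply_of_aemeasurable haem measurableSet_Ici, hlaw,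
    gaussianReal_apply_eq_integral 0 hV,
    ENNReal.toReal_ofReal (setIntegral_nonneg measurableSet_Ici
      (fun x _ => gaussianPDFReal_nonneg _ _ _))]
  set g := gaussianPDFReal 0 v.toNNReal with hg
  have hint : Integrable g := integrable_gaussianPDFReal _ _
  have total : ∫ x, g x = 1 := integral_gaussianPDFReal_eq_one 0 hV
  have h1 : ∫ x in Set.Ici (-t), g x = ∫ x in Set.Ioi (-t), g x :=
    integral_Ici_eq_integral_Ioi
  have h2 : (∫ x in Set.Iic (-t), g x) + ∫ x in Set.Ioi (-t), g x = 1 := by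
    rw [intervalIntegral.integral_Iic_add_Ioi hint.integrableOn hint.integrableOn, total]
  have h3 : ∫ x in Set.Iic (-t), g x ≤ ∫ x in Set.Iic (-a), g x :=
    setIntegral_mono_set hint.integrableOn
      (Filter.Eventually.of_forall (fun x => gaussianPDFReal_nonneg _ _ _))
      ((Set.Iic_subset_Iic.mpr (by linarith)).eventuallyLE)
  have h4 : ∫ x in Set.Iic (-a), g x = (1 - erf (a / s)) / 2 := gauss_Iic hpos ha0
  have h5 : a / s = c := by
    rw [hadef, mul_comm, mul_div_assoc, div_self hs.ne', mul_one]
  rw [h5, hc] at h4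
  linarith
end

section
/- Second-order exponential CBF: let h : [t₀, ∞) → ℝ be twice differentiable satisfying ḧ(t) + ζ₂ ḣ(t) + ζ₁ h(t) ≥ 0 where ζ₁, ζ₂ > 0 are chosen so that the polynomial s² + ζ₂ s + ζ₁ has real negative roots -λ₁, -λ₂ with λ₁, λ₂ > 0. If h(t₀) ≥ 0 and ḣ(t₀) + λ₂ h(t₀) ≥ 0, then h(t) ≥ 0 for all t ≥ t₀. -/
lemma first_order_cbf (f : ℝ → ℝ) (t₀ lam : ℝ)
    (hf : Differentiable ℝ f)
    (hineq : ∀ t, t₀ ≤ t → deriv f t + lam * f t ≥ 0)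
    (h0 : f t₀ ≥ 0) : ∀ t, t₀ ≤ t → f t ≥ 0 := by
  set g : ℝ → ℝ := fun t => f t * Real.exp (lam * t) with hg
  have hgd : Differentiable ℝ g := by
    exact hf.mul ((differentiable_const lam |>.mul differentiable_id).exp)
  have hderiv : ∀ t, deriv g t =
      (deriv f t + lam * f t) * Real.exp (lam * t) := by
    intro t
    have h1 : HasDerivAt (fun t => lam * t) lam t := by
      simpa using (hasDerivAt_id t).const_mul lam
    have h2 : HasDerivAt (fun t => Real.exp (lam * t)) (Real.exp (lam * t) * lam) t :=
      h1.exp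
    have h3 : HasDerivAt f (deriv f t) t := (hf t).hasDerivAt
    have := (h3.mul h2)
    rw [show deriv g t = deriv (f * fun t => Real.exp (lam * t)) t from rfl, this.deriv]; ring
  have hmono : MonotoneOn g (Set.Ici t₀) := by
    apply monotoneOn_of_deriv_nonneg (convex_Ici t₀) hgd.continuous.continuousOn
      (fun x _ => (hgd x).differentiableWithinAt)
    intro x hx
    rw [interior_Ici] at hx
    rw [hderiv]
    exact mul_nonneg (hineq x hx.le) (Real.exp_pos _).le
  intro t ht
  have h1 : g t₀ ≤ g t := hmono (Set.self_mem_Ici) ht ht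
  have h2 : 0 ≤ g t₀ := mul_nonneg h0 (Real.exp_pos _).le
  have h3 : 0 ≤ g t := le_trans h2 h1
  simp only [hg] at h3
  nlinarith [Real.exp_pos (lam * t), h3]


/-- Second-order exponential CBF forward invariance: if
`ḧ + ζ₂ḣ + ζ₁h ≥ 0` with `ζ₂ = λ₁ + λ₂`, `ζ₁ = λ₁λ₂`, `λ₁, λ₂ > 0` (so that
`s² + ζ₂s + ζ₁` has real negative roots `-λ₁, -λ₂`), `h(t₀) ≥ 0` and
`ḣ(t₀) + λ₂h(t₀) ≥ 0`, then `h(t) ≥ 0` for all `t ≥ t₀`. -/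
theorem exponential_cbf_second_order
    (h : ℝ → ℝ) (t₀ ζ₁ ζ₂ lam₁ lam₂ : ℝ)
    (hlam₁ : 0 < lam₁) (hlam₂ : 0 < lam₂)
    (hζ₂ : ζ₂ = lam₁ + lam₂) (hζ₁ : ζ₁ = lam₁ * lam₂)
    (hd1 : Differentiable ℝ h) (hd2 : Differentiable ℝ (deriv h))
    (hineq : ∀ t, t₀ ≤ t → deriv (deriv h) t + ζ₂ * deriv h t + ζ₁ * h t ≥ 0)
    (h0 : h t₀ ≥ 0) (hq0 : deriv h t₀ + lam₂ * h t₀ ≥ 0) :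
    ∀ t, t₀ ≤ t → h t ≥ 0 := by
  set q : ℝ → ℝ := fun t => deriv h t + lam₂ * h t with hqdef
  have hqd : Differentiable ℝ q := hd2.add (hd1.const_mul lam₂)
  have hqderiv : ∀ t, deriv q t = deriv (deriv h) t + lam₂ * deriv h t := by
    intro t
    have h1 : HasDerivAt (deriv h) (deriv (deriv h) t) t := (hd2 t).hasDerivAt
    have h2 : HasDerivAt (fun t => lam₂ * h t) (lam₂ * deriv h t) t :=
      ((hd1 t).hasDerivAt).const_mul lam₂
    exact (h1.add h2).deriv
  have hq : ∀ t, t₀ ≤ t → q t ≥ 0 := by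
    apply first_order_cbf q t₀ lam₁ hqd _ hq0
    intro t ht
    have := hineq t ht
    rw [hqderiv]
    simp only [hqdef]
    subst hζ₁ hζ₂
    nlinarith
  apply first_order_cbf h t₀ lam₂ hd1 _ h0
  intro t ht
  exact hq t ht
end
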